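/- Directed deformation retracts are closed under retracts: if H ⊆ G is a directed deformation retract, G' ⊆ G and H' ⊆ G' ∩ H are subdigraphs, and r : G → G' is a retraction with r(H) ⊆ H', then H' ⊆ G' is a directed deformation retract, witnessed by η' = r ∘ η|_{G'}. -/

import Mathlib

/-- There is a directed path of length `n` from `a` to `b` (steps may be degenerate
arrows, i.e. loops). -/
def PathLen {V : Type} (E : V → V → Prop) (a b : V) (n : ℕ) : Prop :=
  ∃ f : ℕ → V, f 0 = a ∧ f n = b ∧ ∀ i < n, E (f i) (f (i + 1))

/-- The directed distance `dist(a,b) ∈ ℕ ∪ {∞}`. -/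
noncomputable def ddist {V : Type} (E : V → V → Prop) (a b : V) : ℕ∞ :=
  sInf {n : ℕ∞ | ∃ m : ℕ, n = (m : ℕ∞) ∧ PathLen E a b m}

/-- `S` is a directed deformation retract of the digraph with vertex set `D` and
edge relation `E`, witnessed by `η`: `S` is an in-closed subdigraph, `η` is a digraph
map of the digraph into itself, with (DDR1) an arrow `η(g) → g` for every vertex,
(DDR2) `η` fixes `S`, and (DDR3) `dist(h,g) = dist(h,η(g)) + 1` for `g ∈ D ∖ S`,
`h ∈ S`, the distance being the directed path distance of the digraph `(D, E)`. -/
def IsDDRon {V : Type} (D : Set V) (E : V → V → Prop) (S : Set V) (η : V → V) : Prop :=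
  S ⊆ D ∧
  (∀ a ∈ D, ∀ b ∈ D, E a b → b ∈ S → a ∈ S) ∧
  (∀ g ∈ D, η g ∈ D) ∧
  (∀ a ∈ D, ∀ b ∈ D, E a b → E (η a) (η b)) ∧
  (∀ g ∈ D, E (η g) g) ∧
  (∀ h ∈ S, η h = h) ∧
  (∀ g ∈ D, g ∉ S → ∀ h ∈ S, ddist E h g = ddist E h (η g) + 1)

/-- Directed deformation retracts are closed under retracts: if `H ⊆ G` is a directed
deformation retract (vertex set `S`, witness `η`), `G' ⊆ G` is a subdigraph (vertex
set `T`, edge relation `E'` contained in that of `G`), `S' ⊆ T ∩ S`, and `r : G → G'`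
is a retraction with `r(S) ⊆ S'`, then `H' ⊆ G'` is a directed deformation retract,
witnessed by `η' = r ∘ η`. -/
theorem ddist_le_of_map {V : Type} (E E' : V → V → Prop) (φ : V → V)
    (hφ : ∀ a b, E a b → E' (φ a) (φ b)) (a b : V) :
    ddist E' (φ a) (φ b) ≤ ddist E a b := by
  apply sInf_le_sInf
  rintro n ⟨m, rfl, f, hf0, hfm, hstep⟩
  exact ⟨m, rfl, φ ∘ f, by simp [hf0], by simp [hfm],
    fun i hi => hφ _ _ (hstep i hi)⟩

theorem ddist_le_add_one {V : Type} (E : V → V → Prop) {a b c : V} (h : E b c) :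
    ddist E a c ≤ ddist E a b + 1 := by
  rcases Set.eq_empty_or_nonempty {n : ℕ∞ | ∃ m : ℕ, n = (m : ℕ∞) ∧ PathLen E a b m}
    with he | hne
  · have : ddist E a b = ⊤ := by rw [ddist, he, sInf_empty]
    simp [this]
  · obtain ⟨m, hm, f, hf0, hfm, hstep⟩ := csInf_mem hne
    have hpath : PathLen E a c (m + 1) := by
      refine ⟨fun i => if i = m + 1 then c else f i, by simp [hf0], by simp, ?_⟩
      intro i hi
      rcases Nat.lt_or_ge i m with hlt | hge
      · have h1 : i ≠ m + 1 := by omega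
        have h2 : i + 1 ≠ m + 1 := by omega
        simpa [h1, h2, show i ≠ m by omega] using hstep i hlt
      · have h2 : i = m := by omega
        simpa [h2, hfm] using h
    have hle : ddist E a c ≤ ((m + 1 : ℕ) : ℕ∞) :=
      sInf_le ⟨m + 1, rfl, hpath⟩
    calc ddist E a c ≤ ((m + 1 : ℕ) : ℕ∞) := hle
      _ = (m : ℕ∞) + 1 := by push_cast; ring
      _ = ddist E a b + 1 := by rw [ddist, ← hm]

theorem ddr_closed_under_retracts {V : Type}
    (GE : V → V → Prop) (hG : ∀ v, GE v v)
    (S : Set V) (η : V → V)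
    (hDDR : IsDDRon Set.univ GE S η)
    (T : Set V) (E' : V → V → Prop)
    (hE'sub : ∀ a b, E' a b → GE a b ∧ a ∈ T ∧ b ∈ T)
    (hE'refl : ∀ v ∈ T, E' v v)
    (S' : Set V) (hS' : S' ⊆ T ∩ S)
    (r : V → V)
    (hr : ∀ a b, GE a b → E' (r a) (r b))
    (hrid : ∀ v ∈ T, r v = v)
    (hrS : ∀ h ∈ S, r h ∈ S') :
    IsDDRon T E' S' (fun v => r (η v)) := by
  obtain ⟨-, hIn, -, hMap, hD1, hD2, hD3⟩ := hDDR
  have hrT : ∀ v, r v ∈ T := fun v => (hE'sub _ _ (hr v v (hG v))).2.1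
  -- distance in the retract equals ambient distance
  have hdist : ∀ a ∈ T, ∀ b ∈ T, ddist E' a b = ddist GE a b := by
    intro a ha b hb
    apply le_antisymm
    · have := ddist_le_of_map GE E' r hr a b
      rwa [hrid a ha, hrid b hb] at this
    · simpa using ddist_le_of_map E' GE id (fun x y h => (hE'sub x y h).1) a b
  refine ⟨fun x hx => (hS' hx).1, ?_, ?_, ?_, ?_, ?_, ?_⟩
  · -- in-closed
    intro a ha b hb hab hbS'
    have haS : a ∈ S := hIn a trivial b trivial (hE'sub a b hab).1 (hS' hbS').2
    have := hrS a haS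
    rwa [hrid a ha] at this
  · exact fun g _ => hrT (η g)
  · intro a ha b hb hab
    exact hr _ _ (hMap a trivial b trivial (hE'sub a b hab).1)
  · -- DDR1
    intro g hg
    have := hr (η g) g (hD1 g trivial)
    rwa [hrid g hg] at this
  · -- DDR2
    intro h hh
    show r (η h) = h
    rw [hD2 h (hS' hh).2, hrid h (hS' hh).1]
  · -- DDR3
    intro g hg hgS' h hh
    have hhT : h ∈ T := (hS' hh).1
    have hhS : h ∈ S := (hS' hh).2
    have hgS : g ∉ S := by
      intro hgS
      exact hgS' (by rw [← hrid g hg]; exact hrS g hgS)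
    have hedge : E' (r (η g)) g := by
      have := hr (η g) g (hD1 g trivial)
      rwa [hrid g hg] at this
    have hle : ddist E' h g ≤ ddist E' h (r (η g)) + 1 := ddist_le_add_one E' hedge
    have hge : ddist E' h (r (η g)) + 1 ≤ ddist E' h g := by
      have h1 : ddist E' h (r (η g)) ≤ ddist GE h (η g) := by
        have := ddist_le_of_map GE E' r hr h (η g)
        rwa [hrid h hhT] at this
      calc ddist E' h (r (η g)) + 1 ≤ ddist GE h (η g) + 1 := by
            exact add_le_add h1 le_rfl
        _ = ddist GE h g := (hD3 g trivial hgS h hhS).symm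
        _ = ddist E' h g := (hdist h hhT g hg).symm
    exact le_antisymm hle hge
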